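/- Let f: [0,1]^n → ℝ be defined by f(α) = E_σ[sup_{a∈A} Σ_{i=1}^n σ_i α_i a_i] for a nonempty finite set A ⊂ ℝ^n and Rademacher random variables σ. Then f is convex and attains its maximum over [0,1]^n at the all-ones vector, i.e., for all α ∈ [0,1]^n, f(α) ≤ f(1,…,1). -/

import Mathlib

open MeasureTheory

/-- The uniform measure on sign vectors `Fin n → Bool` (i.i.d. Rademacher signs). -/
noncomputable def rademacherMeasure (n : ℕ) : Measure (Fin n → Bool) :=
  (PMF.uniformOfFintype (Fin n → Bool)).toMeasure

/-- The sign `±1` associated to a Boolean. -/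
def sgn (b : Bool) : ℝ := if b then 1 else -1

/-- `f(α) = E_σ[sup_{a∈A} Σ_i σ_i α_i a_i]`. -/
noncomputable def fRad {n : ℕ} (A : Finset (Fin n → ℝ)) (α : Fin n → ℝ) : ℝ :=
  ∫ σ : Fin n → Bool,
    sSup ((fun a : Fin n → ℝ => ∑ i, sgn (σ i) * α i * a i) '' A) ∂(rademacherMeasure n)

namespace FRadAux

variable {n : ℕ} (A : Finset (Fin n → ℝ)) (hA : A.Nonempty)

/-- The inner supremum, as a `Finset.sup'`. -/
noncomputable def F (σ : Fin n → Bool) (α : Fin n → ℝ) : ℝ :=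
  A.sup' hA (fun a => ∑ i, sgn (σ i) * α i * a i)

/-- The unnormalized sum over all sign patterns. -/
noncomputable def S (α : Fin n → ℝ) : ℝ := ∑ σ : Fin n → Bool, F A hA σ α

instance (n : ℕ) : IsProbabilityMeasure (rademacherMeasure n) :=
  PMF.toMeasure.isProbabilityMeasure _

lemma fRad_eq (α : Fin n → ℝ) :
    fRad A α = ((Fintype.card (Fin n → Bool) : ℝ))⁻¹ * S A hA α := by
  have h : ∀ σ : Fin n → Bool,
      sSup ((fun a : Fin n → ℝ => ∑ i, sgn (σ i) * α i * a i) '' A) = F A hA σ α := by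
    intro σ
    rw [F, Finset.sup'_eq_csSup_image]
  unfold fRad
  simp_rw [h]
  rw [integral_fintype .of_finite]
  have hsing : ∀ σ : Fin n → Bool,
      ((rademacherMeasure n) {σ}).toReal = ((Fintype.card (Fin n → Bool) : ℝ))⁻¹ := by
    intro σ
    rw [rademacherMeasure, PMF.toMeasure_apply_singleton _ _ (measurableSet_singleton σ)]
    simp [PMF.uniformOfFintype_apply, ENNReal.toReal_inv]
  simp_rw [measureReal_def, hsing, smul_eq_mul, S, Finset.mul_sum]

lemma F_convex (σ : Fin n → Bool) {x y : Fin n → ℝ} {a b : ℝ}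
    (ha : 0 ≤ a) (hb : 0 ≤ b) (hab : a + b = 1) :
    F A hA σ (a • x + b • y) ≤ a * F A hA σ x + b * F A hA σ y := by
  simp only [F]
  apply Finset.sup'_le
  intro v hv
  have hlin : ∑ i, sgn (σ i) * (a • x + b • y) i * v i
      = a * ∑ i, sgn (σ i) * x i * v i + b * ∑ i, sgn (σ i) * y i * v i := by
    simp only [Pi.add_apply, Pi.smul_apply, smul_eq_mul, Finset.mul_sum,
      ← Finset.sum_add_distrib]
    apply Finset.sum_congr rfl
    intro i _
    ring
  rw [hlin]
  gcongr
  · exact Finset.le_sup' (fun a => ∑ i, sgn (σ i) * x i * a i) hv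
  · exact Finset.le_sup' (fun a => ∑ i, sgn (σ i) * y i * a i) hv

lemma S_convex {x y : Fin n → ℝ} {a b : ℝ}
    (ha : 0 ≤ a) (hb : 0 ≤ b) (hab : a + b = 1) :
    S A hA (a • x + b • y) ≤ a * S A hA x + b * S A hA y := by
  simp only [S, Finset.mul_sum, ← Finset.sum_add_distrib]
  exact Finset.sum_le_sum fun σ _ => F_convex A hA σ ha hb hab

/-- Flipping sign `i` : key pairing inequality. -/
lemma F_flip_le (σ : Fin n → Bool) (α : Fin n → ℝ) (i : Fin n) :
    2 * F A hA σ (Function.update α i 0)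
      ≤ F A hA σ (Function.update α i 1)
        + F A hA (Function.update σ i (!σ i)) (Function.update α i 1) := by
  have h : F A hA σ (Function.update α i 0)
      ≤ (F A hA σ (Function.update α i 1)
        + F A hA (Function.update σ i (!σ i)) (Function.update α i 1)) / 2 := by
    simp only [F]
    apply Finset.sup'_le
    intro v hv
    have hkey : ∑ j, sgn (σ j) * Function.update α i 0 j * v j
        = ((∑ j, sgn (σ j) * Function.update α i 1 j * v j)
          + ∑ j, sgn (Function.update σ i (!σ i) j) * Function.update α i 1 j * v j) / 2 := by
      rw [← Finset.sum_add_distrib, Finset.sum_div]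
      apply Finset.sum_congr rfl
      intro j _
      rcases eq_or_ne j i with rfl | hj
      · simp only [Function.update_self]
        cases σ j <;> simp [sgn] <;> ring
      · simp only [Function.update_of_ne hj]
        ring
    rw [hkey]
    gcongr
    · exact Finset.le_sup' (fun a => ∑ j, sgn (σ j) * Function.update α i 1 j * a j) hv
    · exact Finset.le_sup'
        (fun a => ∑ j, sgn (Function.update σ i (!σ i) j) * Function.update α i 1 j * a j) hv
  linarith

lemma flip_involutive (i : Fin n) :
    Function.Involutive (fun σ : Fin n → Bool => Function.update σ i (!σ i)) := by
  intro σ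
  funext j
  rcases eq_or_ne j i with rfl | hj
  · simp [Function.update_self]
  · simp [Function.update_of_ne hj]

lemma S_flip (α : Fin n → ℝ) (i : Fin n) :
    ∑ σ : Fin n → Bool, F A hA (Function.update σ i (!σ i)) α = S A hA α :=
  Fintype.sum_bijective _ (flip_involutive i).bijective _ _ (fun _ => rfl)

lemma S_update_zero_le (α : Fin n → ℝ) (i : Fin n) :
    S A hA (Function.update α i 0) ≤ S A hA (Function.update α i 1) := by
  have h : 2 * S A hA (Function.update α i 0)
      ≤ S A hA (Function.update α i 1) + S A hA (Function.update α i 1) := by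
    rw [S, Finset.mul_sum]
    calc ∑ σ : Fin n → Bool, 2 * F A hA σ (Function.update α i 0)
        ≤ ∑ σ : Fin n → Bool, (F A hA σ (Function.update α i 1)
            + F A hA (Function.update σ i (!σ i)) (Function.update α i 1)) :=
          Finset.sum_le_sum fun σ _ => F_flip_le A hA σ α i
      _ = S A hA (Function.update α i 1) + S A hA (Function.update α i 1) := by
          rw [Finset.sum_add_distrib, S_flip]; rfl
  linarith

lemma S_le_update (α : Fin n → ℝ) (hα : α ∈ Set.Icc (0 : Fin n → ℝ) 1) (i : Fin n) :
    S A hA α ≤ S A hA (Function.update α i 1) := by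
  have ht0 : (0:ℝ) ≤ α i := hα.1 i
  have ht1 : α i ≤ 1 := hα.2 i
  have hxy : α = α i • Function.update α i 1 + (1 - α i) • Function.update α i 0 := by
    funext j
    rcases eq_or_ne j i with rfl | hj
    · simp [Function.update_self]
    · simp only [Pi.add_apply, Pi.smul_apply, Function.update_of_ne hj, smul_eq_mul]
      ring
  calc S A hA α
      = S A hA (α i • Function.update α i 1 + (1 - α i) • Function.update α i 0) := by
        rw [← hxy]
    _ ≤ α i * S A hA (Function.update α i 1)
        + (1 - α i) * S A hA (Function.update α i 0) :=
        S_convex A hA ht0 (by linarith) (by ring)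
    _ ≤ α i * S A hA (Function.update α i 1)
        + (1 - α i) * S A hA (Function.update α i 1) := by
        have := S_update_zero_le A hA α i
        nlinarith
    _ = S A hA (Function.update α i 1) := by ring

lemma S_le_partial (α : Fin n → ℝ) (hα : α ∈ Set.Icc (0 : Fin n → ℝ) 1)
    (s : Finset (Fin n)) :
    S A hA α ≤ S A hA (fun i => if i ∈ s then 1 else α i) := by
  induction s using Finset.induction with
  | empty => simp
  | @insert i s hi ih =>
    have hg : (fun j => if j ∈ s then 1 else α j) ∈ Set.Icc (0 : Fin n → ℝ) 1 := by
      constructor <;> intro j <;> simp only [Pi.zero_apply, Pi.one_apply] <;>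
        by_cases hj : j ∈ s <;> simp [hj]
      · exact hα.1 j
      · exact hα.2 j
    have heq : Function.update (fun j => if j ∈ s then 1 else α j) i 1
        = fun j => if j ∈ insert i s then 1 else α j := by
      funext j
      rcases eq_or_ne j i with rfl | hj
      · simp [Function.update_self]
      · simp [Function.update_of_ne hj, Finset.mem_insert, hj]
    calc S A hA α ≤ S A hA (fun j => if j ∈ s then 1 else α j) := ih
      _ ≤ S A hA (Function.update (fun j => if j ∈ s then 1 else α j) i 1) :=
          S_le_update A hA _ hg i
      _ = _ := by rw [heq]

lemma S_le_one (α : Fin n → ℝ) (hα : α ∈ Set.Icc (0 : Fin n → ℝ) 1) :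
    S A hA α ≤ S A hA 1 := by
  have := S_le_partial A hA α hα Finset.univ
  simp at this; exact this

end FRadAux

open FRadAux in
/-- `f` is convex on `[0,1]^n` and attains its maximum there at the all-ones vector. -/
theorem fRad_convex_max {n : ℕ} (A : Finset (Fin n → ℝ)) (hA : A.Nonempty) :
    ConvexOn ℝ (Set.Icc (0 : Fin n → ℝ) 1) (fRad A) ∧
    ∀ α ∈ Set.Icc (0 : Fin n → ℝ) 1, fRad A α ≤ fRad A 1 := by
  set c : ℝ := ((Fintype.card (Fin n → Bool) : ℝ))⁻¹ with hc
  have hc0 : 0 ≤ c := by positivity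
  constructor
  · refine ⟨convex_Icc _ _, fun x _ y _ a b ha hb hab => ?_⟩
    simp only [smul_eq_mul, fRad_eq A hA]
    have := S_convex A hA (x := x) (y := y) ha hb hab
    nlinarith
  · intro α hα
    simp only [fRad_eq A hA]
    exact mul_le_mul_of_nonneg_left (S_le_one A hA α hα) hc0
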